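/- Let G be a locally compact group with left Haar measure μ, and S ⊆ G a closed subsemigroup containing the identity with S⁻¹S = G and with nonempty interior. For d ∈ S let S_d = {(a, b) ∈ S × S : da⁻¹b ∈ S}. Then the set of ξ ∈ L²(G × G, μ ⊗ μ) that vanish a.e. outside S_d for some d ∈ S is dense in the closed subspace of all ξ ∈ L²(G × G, μ ⊗ μ) vanishing a.e. outside S × S. -/

import Mathlib

open MeasureTheory Set Pointwise

section Aux

/-- Inner regularity for lower integrals: the mass outside of a compact closed set
can be made arbitrarily small. -/
lemma exists_compact_lintegral_compl_le
    {G : Type*} [TopologicalSpace G] [MeasurableSpace G] [BorelSpace G] [R1Space G]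
    (μ : Measure G) [μ.InnerRegularCompactLTTop]
    {f : G → ENNReal} (hf : Measurable f) (hfin : ∫⁻ x, f x ∂μ ≠ ⊤)
    {ε : ENNReal} (hε : ε ≠ 0) :
    ∃ K : Set G, IsCompact K ∧ IsClosed K ∧ ∫⁻ x in Kᶜ, f x ∂μ ≤ ε := by
  set ν := μ.withDensity f with hν
  have hνac : ν ≪ μ := withDensity_absolutelyContinuous μ f
  haveI : IsFiniteMeasure ν := isFiniteMeasure_withDensity hfin
  set B : ℕ → Set G := fun n => f ⁻¹' (Set.Icc ((n : ENNReal) + 1)⁻¹ ((n : ENNReal) + 1))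
    with hB
  have hBm : ∀ n, MeasurableSet (B n) := fun n => hf measurableSet_Icc
  have hBmem : ∀ n x, x ∈ B n ↔ ((n : ENNReal) + 1)⁻¹ ≤ f x ∧ f x ≤ (n : ENNReal) + 1 := by
    intro n x; rw [hB]; exact Set.mem_Icc
  have hBmono : Monotone B := by
    intro n m hnm x hx
    have h2 : ((n : ENNReal) + 1) ≤ ((m : ENNReal) + 1) := by
      have : (n : ENNReal) ≤ (m : ENNReal) := by exact_mod_cast hnm
      gcongr
    have h1 : ((m : ENNReal) + 1)⁻¹ ≤ ((n : ENNReal) + 1)⁻¹ := by gcongr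
    rw [hBmem] at hx ⊢
    exact ⟨le_trans h1 hx.1, le_trans hx.2 h2⟩
  have hcompl : ν ((⋃ n, B n)ᶜ) = 0 := by
    have hsub : (⋃ n, B n)ᶜ ⊆ {x | f x = 0} ∪ {x | f x = ⊤} := by
      intro x hx
      by_contra hc
      simp only [mem_union, mem_setOf_eq, not_or] at hc
      apply hx
      obtain ⟨n, hn⟩ := ENNReal.exists_nat_gt (h := hc.2)
      obtain ⟨m, hm⟩ := ENNReal.exists_nat_gt (h := ENNReal.inv_ne_top.mpr hc.1)
      refine mem_iUnion.mpr ⟨n + m, (hBmem _ _).mpr ⟨?_, ?_⟩⟩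
      · rw [← ENNReal.inv_le_iff_inv_le]
        refine hm.le.trans ?_
        push_cast
        exact le_add_self.trans le_self_add
      · refine hn.le.trans ?_
        push_cast
        exact le_self_add.trans le_self_add
    have h1 : ν {x | f x = 0} = 0 := by
      have hms : MeasurableSet {x | f x = 0} := hf (measurableSet_singleton 0)
      rw [hν, withDensity_apply _ hms, setLIntegral_eq_zero_iff hms hf]
      exact Filter.Eventually.of_forall fun x hx => hx
    have h2 : ν {x | f x = ⊤} = 0 := by
      apply hνac
      have := ae_lt_top hf hfin
      rw [ae_iff] at this
      simpa [lt_top_iff_ne_top] using this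
    refine le_antisymm (le_trans (measure_mono hsub) ?_) (zero_le ..)
    exact le_trans (measure_union_le _ _) (by simp [h1, h2])
  have hνuniv : ν univ = ⨆ n, ν (B n) := by
    rw [← (hBmono.directed_le).measure_iUnion]
    refine le_antisymm ?_ (measure_mono (subset_univ _))
    calc ν univ = ν ((⋃ n, B n) ∪ (⋃ n, B n)ᶜ) := by rw [union_compl_self]
      _ ≤ ν (⋃ n, B n) + ν ((⋃ n, B n)ᶜ) := measure_union_le _ _
      _ = ν (⋃ n, B n) := by rw [hcompl, add_zero]
  -- choose n with ν (B n)ᶜ ≤ ε / 2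
  have hνtop : ν univ ≠ ⊤ := measure_ne_top ν univ
  obtain ⟨n, hn⟩ : ∃ n, ν ((B n)ᶜ) ≤ ε / 2 := by
    by_cases hle : ν univ ≤ ε / 2
    · exact ⟨0, le_trans (measure_mono (subset_univ _)) hle⟩
    · push_neg at hle
      have hν0 : ν univ ≠ 0 := by
        intro h; rw [h] at hle; exact (not_lt_of_ge (zero_le ..)) hle
      have hε2 : (ε / 2) ≠ 0 := by
        simp [ENNReal.div_eq_zero_iff, hε]
      have hlt : ν univ - ε / 2 < ⨆ n, ν (B n) := by
        rw [← hνuniv]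
        exact ENNReal.sub_lt_self hνtop hν0 hε2
      obtain ⟨n, hn⟩ := lt_iSup_iff.mp hlt
      refine ⟨n, ?_⟩
      rw [measure_compl (hBm n) (measure_ne_top ν _)]
      rw [tsub_le_iff_right]
      calc ν univ ≤ ε / 2 + (ν univ - ε / 2) := le_add_tsub
        _ ≤ ε / 2 + ν (B n) := by gcongr
  -- B n has finite μ-measure
  have hBfin : μ (B n) ≠ ⊤ := by
    have hsub : B n ⊆ {x | ((n : ENNReal) + 1)⁻¹ ≤ f x} := fun x hx => ((hBmem n x).mp hx).1
    have := meas_ge_le_lintegral_div (μ := μ) hf.aemeasurable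
      (ε := ((n : ENNReal) + 1)⁻¹) (by simp) (by simp [ENNReal.inv_ne_top])
    refine ne_top_of_le_ne_top ?_ (le_trans (measure_mono hsub) this)
    exact (ENNReal.div_lt_top hfin (by simp)).ne
  -- inner regularity
  have hε' : ε / 2 / ((n : ENNReal) + 1) ≠ 0 := by
    refine (ENNReal.div_pos ?_ (by simp)).ne'
    simp [ENNReal.div_eq_zero_iff, hε]
  obtain ⟨K, hKB, hKco, hKcl, hKd⟩ :=
    (hBm n).exists_isCompact_isClosed_diff_lt hBfin hε'
  refine ⟨K, hKco, hKcl, ?_⟩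
  have hsub : Kᶜ ⊆ (B n)ᶜ ∪ (B n \ K) := by
    intro x hx
    by_cases hxB : x ∈ B n
    · exact Or.inr ⟨hxB, hx⟩
    · exact Or.inl hxB
  calc ∫⁻ x in Kᶜ, f x ∂μ ≤ ∫⁻ x in (B n)ᶜ ∪ (B n \ K), f x ∂μ := lintegral_mono_set hsub
    _ ≤ ∫⁻ x in (B n)ᶜ, f x ∂μ + ∫⁻ x in B n \ K, f x ∂μ := lintegral_union_le _ _ _
    _ ≤ ε / 2 + ε / 2 := by
        gcongr
        · rw [← withDensity_apply _ (hBm n).compl]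
          exact hn
        · calc ∫⁻ x in B n \ K, f x ∂μ ≤ ∫⁻ _x in B n \ K, ((n : ENNReal) + 1) ∂μ :=
                setLIntegral_mono measurable_const (fun x hx => ((hBmem n x).mp hx.1).2)
            _ = ((n : ENNReal) + 1) * μ (B n \ K) := setLIntegral_const _ _
            _ ≤ ((n : ENNReal) + 1) * (ε / 2 / ((n : ENNReal) + 1)) := by gcongr
            _ ≤ ε / 2 := ENNReal.mul_div_le
    _ = ε := ENNReal.add_halves ε


lemma exists_v_mem_interior
    {G : Type*} [Group G] [TopologicalSpace G] [IsTopologicalGroup G]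
    (S : Submonoid G)
    (hSG : ∀ g : G, ∃ s ∈ S, ∃ t ∈ S, g = s⁻¹ * t)
    (hint : (interior (S : Set G)).Nonempty) (a : G) :
    ∃ v, v ∈ S ∧ v * a⁻¹ ∈ interior (S : Set G) := by
  obtain ⟨u, hu⟩ := hint
  obtain ⟨s, hs, t, ht, hst⟩ := hSG a⁻¹
  refine ⟨u * s, S.mul_mem (interior_subset hu) hs, ?_⟩
  have h1 : u * s * a⁻¹ = u * t := by rw [hst]; group
  rw [h1]
  have hsub : interior (S : Set G) * ({t} : Set G) ⊆ interior (S : Set G) := by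
    apply interior_maximal
    · rintro _ ⟨w, hw, t', ht', rfl⟩
      rw [Set.mem_singleton_iff] at ht'
      subst ht'
      exact S.mul_mem (interior_subset hw) ht
    · exact isOpen_interior.mul_right
  exact hsub (Set.mul_mem_mul hu rfl)


lemma exists_common_d
    {G : Type*} [Group G]
    (S : Submonoid G)
    (hSG : ∀ g : G, ∃ s ∈ S, ∃ t ∈ S, g = s⁻¹ * t)
    (F : Finset G) (hF : ∀ w ∈ F, w ∈ S) :
    ∃ d ∈ S, ∀ w ∈ F, ∃ s ∈ S, d = s * w := by
  classical
  induction F using Finset.induction_on with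
  | empty => exact ⟨1, S.one_mem, fun w hw => absurd hw (Finset.notMem_empty w)⟩
  | @insert w F hwF ih =>
    obtain ⟨d, hd, hdF⟩ := ih (fun w' hw' => hF w' (Finset.mem_insert_of_mem hw'))
    obtain ⟨s, hs, t, ht, hst⟩ := hSG (d * w⁻¹)
    have key : s * d = t * w := by
      have : s * (d * w⁻¹) = t := by rw [hst]; group
      rw [← this]; group
    refine ⟨s * d, S.mul_mem hs hd, fun w' hw' => ?_⟩
    rcases Finset.mem_insert.mp hw' with rfl | hw'
    · exact ⟨t, ht, key⟩
    · obtain ⟨s', hs', hds'⟩ := hdF w' hw'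
      exact ⟨s * s', S.mul_mem hs hs', by rw [hds', mul_assoc]⟩


end Aux

/-- Let `G` be a locally compact group with left Haar measure `μ`, and
`S ⊆ G` a closed subsemigroup containing the identity with `S⁻¹S = G` and with
nonempty interior.  For `d ∈ S` let `S_d = {(a, b) ∈ S × S : da⁻¹b ∈ S}`.
Then the set of `ξ ∈ L²(G × G, μ ⊗ μ)` that vanish a.e. outside `S_d` for some
`d ∈ S` is dense in the closed subspace of all `ξ ∈ L²(G × G, μ ⊗ μ)`
vanishing a.e. outside `S × S`. -/
theorem dense_union_Hd
    {G : Type*} [Group G] [TopologicalSpace G] [IsTopologicalGroup G]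
    [LocallyCompactSpace G] [MeasurableSpace G] [BorelSpace G]
    (μ : Measure G) [μ.IsHaarMeasure] [μ.Regular] [SFinite μ]
    (S : Submonoid G) (hS : IsClosed (S : Set G))
    (hSG : ∀ g : G, ∃ s ∈ S, ∃ t ∈ S, g = s⁻¹ * t)
    (hint : (interior (S : Set G)).Nonempty) :
    ∀ ξ : Lp ℂ 2 (μ.prod μ),
      (∀ᵐ x ∂(μ.prod μ), x ∉ (S : Set G) ×ˢ (S : Set G) → ξ x = 0) →
      ξ ∈ closure {η : Lp ℂ 2 (μ.prod μ) | ∃ d ∈ S,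
        ∀ᵐ x ∂(μ.prod μ),
          x ∉ {y : G × G | y.1 ∈ S ∧ y.2 ∈ S ∧ d * y.1⁻¹ * y.2 ∈ S} → η x = 0} := by
  classical
  intro ξ hξ
  rw [Metric.mem_closure_iff]
  intro ε hε
  -- a strongly measurable representative of ξ
  obtain ⟨ξ', hξ'm, hξ'ae⟩ : ∃ ξ'' : G × G → ℂ, StronglyMeasurable ξ'' ∧
      ⇑ξ =ᵐ[μ.prod μ] ξ'' :=
    ⟨(Lp.aestronglyMeasurable ξ).mk _,
      (Lp.aestronglyMeasurable ξ).stronglyMeasurable_mk,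
      (Lp.aestronglyMeasurable ξ).ae_eq_mk⟩
  have hξ'meas : Measurable ξ' := hξ'm.measurable
  set F : G × G → ENNReal := fun x => (‖ξ' x‖₊ : ENNReal) ^ (2 : ℝ) with hFdef
  have hFm : Measurable F := hξ'meas.enorm.pow_const _
  have hFfin : ∫⁻ x, F x ∂(μ.prod μ) ≠ ⊤ := by
    have h2 := Lp.eLpNorm_ne_top ξ
    rw [eLpNorm_eq_lintegral_rpow_enorm_toReal (by norm_num) (by norm_num)] at h2
    have htr : (2 : ENNReal).toReal = (2 : ℝ) := by simp
    rw [htr] at h2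
    have hcongr : ∫⁻ x, ‖ξ x‖ₑ ^ (2 : ℝ) ∂(μ.prod μ)
        = ∫⁻ x, F x ∂(μ.prod μ) :=
      lintegral_congr_ae (hξ'ae.mono fun x hx => by rw [hFdef]; simp [hx, enorm_eq_nnnorm])
    rw [hcongr] at h2
    intro htop
    rw [htop] at h2
    simp [ENNReal.top_rpow_of_pos (by norm_num : (0:ℝ) < 1/2)] at h2
  set f : G → ENNReal := fun a => ∫⁻ b, F (a, b) ∂μ with hfdef
  have hfm : Measurable f := hFm.lintegral_prod_right'
  have hffin : ∫⁻ a, f a ∂μ ≠ ⊤ := by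
    rw [hfdef, ← lintegral_prod F hFm.aemeasurable] at *
    exact hFfin
  -- choose a compact closed K capturing most of the mass
  set ε₀ : ENNReal := (ENNReal.ofReal (ε / 2)) ^ (2 : ℝ) with hε₀def
  have hε₀ : ε₀ ≠ 0 := by
    refine (ENNReal.rpow_pos ?_ ENNReal.ofReal_ne_top).ne'
    exact ENNReal.ofReal_pos.mpr (by linarith)
  obtain ⟨K, hKco, hKcl, hKle⟩ := exists_compact_lintegral_compl_le μ hfm hffin hε₀
  -- covering of K ∩ S by the basic open sets
  choose v hvS hvint using exists_v_mem_interior S hSG hint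
  set O : G → Set G := fun a => {b : G | v a * b⁻¹ ∈ interior (S : Set G)} with hOdef
  have hOopen : ∀ a, IsOpen (O a) :=
    fun a => isOpen_interior.preimage (continuous_const.mul continuous_inv)
  have hT : IsCompact (K ∩ (S : Set G)) := hKco.inter_right hS
  obtain ⟨t, -, hcov⟩ := hT.elim_nhds_subcover O
    (fun a _ => (hOopen a).mem_nhds (hvint a))
  obtain ⟨d, hdS, hd⟩ := exists_common_d S hSG (t.image v) (by
    intro w hw
    obtain ⟨a, -, rfl⟩ := Finset.mem_image.mp hw
    exact hvS a)
  set W : Set G := (⋃ a ∈ t, O a) ∪ ((S : Set G))ᶜ with hWdef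
  have hWopen : IsOpen W := (isOpen_biUnion fun a _ => hOopen a).union hS.isOpen_compl
  have hKW : K ⊆ W := by
    intro a haK
    by_cases haS : a ∈ (S : Set G)
    · exact Or.inl (hcov ⟨haK, haS⟩)
    · exact Or.inr haS
  have hmeas : MeasurableSet (W ×ˢ (univ : Set G)) :=
    hWopen.measurableSet.prod MeasurableSet.univ
  set η : Lp ℂ 2 (μ.prod μ) :=
    MemLp.toLp _ ((Lp.memLp ξ).indicator hmeas) with hηdef
  have hηae : ⇑η =ᵐ[μ.prod μ] (W ×ˢ (univ : Set G)).indicator ⇑ξ := MemLp.coeFn_toLp _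
  refine ⟨η, ⟨d, hdS, ?_⟩, ?_⟩
  · -- η vanishes a.e. outside S_d
    filter_upwards [hξ, hηae] with x hx0 hxη hxd
    rw [hxη]
    by_cases hW : x ∈ W ×ˢ (univ : Set G)
    · rw [Set.indicator_of_mem hW]
      by_cases hxS : x ∈ (S : Set G) ×ˢ (S : Set G)
      · exfalso
        apply hxd
        obtain ⟨hx1, hx2⟩ := hxS
        rcases hW.1 with hx1W | hx1W
        · simp only [Set.mem_iUnion] at hx1W
          obtain ⟨a, hat, hOa⟩ := hx1W
          obtain ⟨s, hs, hds⟩ := hd (v a) (Finset.mem_image_of_mem v hat)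
          refine ⟨hx1, hx2, ?_⟩
          have heq : d * x.1⁻¹ * x.2 = s * (v a * x.1⁻¹) * x.2 := by rw [hds]; group
          rw [heq]
          exact S.mul_mem (S.mul_mem hs (interior_subset hOa)) hx2
        · exact absurd hx1 hx1W
      · exact hx0 hxS
    · exact Set.indicator_of_notMem hW _
  · -- distance estimate
    rw [← edist_lt_ofReal, Lp.edist_def]
    have h1 : (⇑ξ - ⇑η : G × G → ℂ) =ᵐ[μ.prod μ]
        ((W ×ˢ (univ : Set G))ᶜ).indicator ⇑ξ := by
      filter_upwards [hηae] with x hxη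
      simp only [Pi.sub_apply, hxη]
      by_cases hW : x ∈ W ×ˢ (univ : Set G)
      · rw [Set.indicator_of_mem hW, Set.indicator_of_notMem (Set.notMem_compl_iff.mpr hW)]
        ring
      · rw [Set.indicator_of_notMem hW, Set.indicator_of_mem (Set.mem_compl hW)]
        ring
    have hsub : ((W ×ˢ (univ : Set G))ᶜ) ⊆ Kᶜ ×ˢ (univ : Set G) := by
      intro x hx
      refine ⟨fun hxK => hx ⟨hKW hxK, trivial⟩, trivial⟩
    have hbound : eLpNorm (⇑ξ) 2 ((μ.prod μ).restrict (Kᶜ ×ˢ (univ : Set G)))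
        ≤ ENNReal.ofReal (ε / 2) := by
      rw [eLpNorm_eq_lintegral_rpow_enorm_toReal (by norm_num) (by norm_num)]
      have htr : (2 : ENNReal).toReal = (2 : ℝ) := by simp
      rw [htr]
      have hcongr : ∫⁻ x, ‖ξ x‖ₑ ^ (2 : ℝ)
            ∂((μ.prod μ).restrict (Kᶜ ×ˢ (univ : Set G)))
          = ∫⁻ x, F x ∂((μ.prod μ).restrict (Kᶜ ×ˢ (univ : Set G))) :=
        lintegral_congr_ae ((ae_restrict_of_ae (hξ'ae.mono fun x hx => by
          rw [hFdef]; simp [hx, enorm_eq_nnnorm])))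
      rw [hcongr]
      have hrw : ∫⁻ x, F x ∂((μ.prod μ).restrict (Kᶜ ×ˢ (univ : Set G)))
          = ∫⁻ a in Kᶜ, f a ∂μ := by
        rw [← Measure.prod_restrict, Measure.restrict_univ,
          lintegral_prod F hFm.aemeasurable]
      rw [hrw]
      calc (∫⁻ a in Kᶜ, f a ∂μ) ^ (1 / (2:ℝ)) ≤ ε₀ ^ (1 / (2:ℝ)) :=
            ENNReal.rpow_le_rpow hKle (by norm_num)
        _ = ENNReal.ofReal (ε / 2) := by
            rw [hε₀def, ← ENNReal.rpow_mul]
            norm_num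
    calc eLpNorm (⇑ξ - ⇑η) 2 (μ.prod μ)
        = eLpNorm (((W ×ˢ (univ : Set G))ᶜ).indicator ⇑ξ) 2 (μ.prod μ) :=
          eLpNorm_congr_ae h1
      _ = eLpNorm (⇑ξ) 2 ((μ.prod μ).restrict ((W ×ˢ (univ : Set G))ᶜ)) :=
          eLpNorm_indicator_eq_eLpNorm_restrict hmeas.compl
      _ ≤ eLpNorm (⇑ξ) 2 ((μ.prod μ).restrict (Kᶜ ×ˢ (univ : Set G))) :=
          eLpNorm_mono_measure _ (Measure.restrict_mono hsub le_rfl)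
      _ ≤ ENNReal.ofReal (ε / 2) := hbound
      _ < ENNReal.ofReal ε := (ENNReal.ofReal_lt_ofReal_iff hε).mpr (by linarith)
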